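/- arXiv:2410.04502 — 2 statements merged into one kernel-verified Lean document; each statement's English description precedes it below -/
import Mathlib

section
/- Fix n ≥ 1 and work in U = U_q(A(0,2)^{(4)})^+. If [L_j, L₁²] = 0 (plain commutator) for every 1 ≤ j ≤ n−2, then [X_{2k+1}, Y_{n−2k}] = L_n for every integer k with 0 ≤ k ≤ (n−1)/2, and [X_{2k+2}, Y_{n−2k−1}] = L_n′ for every integer k with 0 ≤ k ≤ (n−2)/2 (here the brackets are braided brackets of the homogeneous elements indicated). -/
noncomputable section

namespace QAff

abbrev F : Type := FreeAlgebra ℂ (Fin 2)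

def x1 : F := FreeAlgebra.ι ℂ 0
def x2 : F := FreeAlgebra.ι ℂ 1

def θ (q : ℂ) : ℂ := q - q⁻¹

def L1F (q : ℂ) : F := x1 * x2 - q⁻¹ • (x2 * x1)

def X2F (q : ℂ) : F := x1 * L1F q - L1F q * x1

def Y2F (q : ℂ) : F := L1F q * x2 + x2 * L1F q

/-- the quantum Serre relator `[x₁,[x₁,[x₁,x₂]]]` (braided brackets w.r.t. the bicharacter
`χ((a,b),(c,d)) = (-1)^(bd) q^(ac-ad-bc+bd)`). -/
def serre1 (q : ℂ) : F := x1 * X2F q - q • (X2F q * x1)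

/-- the quantum Serre relator `[[[x₁,x₂],x₂],x₂]` (braided brackets). -/
def serre2 (q : ℂ) : F := Y2F q * x2 - q • (x2 * Y2F q)

inductive Rel (q : ℂ) : F → F → Prop
  | one : Rel q (serre1 q) 0
  | two : Rel q (serre2 q) 0

/-- `U = U_q(A(0,2)^{(4)})^+`, the free algebra on `x₁, x₂` modulo the two-sided ideal
generated by the quantum Serre relators. -/
abbrev U (q : ℂ) : Type := RingQuot (Rel q)

def π (q : ℂ) : F →ₐ[ℂ] U q := RingQuot.mkAlgHom ℂ (Rel q)

/-- `L₁ = [X₁,Y₁] = x₁x₂ - q⁻¹ x₂x₁` in `U`. -/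
def L1U (q : ℂ) : U q := π q x1 * π q x2 - q⁻¹ • (π q x2 * π q x1)

/-- real root vectors `X_n`, `n ≥ 1` (`X 0 := 0` is junk):
`X₁ = x₁`, `X_{n+1} = [X_n, L₁] = X_n L₁ - (-1)^(n-1) L₁ X_n`
(the braiding scalar is `χ((n,n-1),(1,1)) = (-1)^(n-1)`). -/
def X (q : ℂ) : ℕ → U q
  | 0 => 0
  | 1 => π q x1
  | (n+2) => X q (n+1) * L1U q - ((-1 : ℂ)^n) • (L1U q * X q (n+1))

/-- real root vectors `Y_n`, `n ≥ 1` (`Y 0 := 0` is junk):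
`Y₁ = x₂`, `Y_{n+1} = [L₁, Y_n] = L₁ Y_n - (-1)^n Y_n L₁`
(the braiding scalar is `χ((1,1),(n-1,n)) = (-1)^n`). -/
def Y (q : ℂ) : ℕ → U q
  | 0 => 0
  | 1 => π q x2
  | (n+2) => L1U q * Y q (n+1) - ((-1 : ℂ)^(n+1)) • (Y q (n+1) * L1U q)

/-- `L₀ = θ⁻¹·1`, and `L_n = [X₁, Y_n] = X₁Y_n - q⁻¹ Y_n X₁` for `n ≥ 1`
(the braiding scalar is `χ((1,0),(n-1,n)) = q⁻¹`). -/
def L (q : ℂ) : ℕ → U q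
  | 0 => (θ q)⁻¹ • 1
  | (n+1) => X q 1 * Y q (n+1) - q⁻¹ • (Y q (n+1) * X q 1)

/-- `L₀′ = θ⁻¹·1`, `L₁′ = L₁`, and
`L_n′ = [X₂, Y_{n-1}] = X₂Y_{n-1} - (-1)^(n-1) q⁻¹ Y_{n-1}X₂` for `n ≥ 2`
(the braiding scalar is `χ((2,1),(n-2,n-1)) = (-1)^(n-1) q⁻¹`). -/
def L' (q : ℂ) : ℕ → U q
  | 0 => (θ q)⁻¹ • 1
  | 1 => L q 1
  | (n+2) => X q 2 * Y q (n+1) - ((-1 : ℂ)^(n+1) * q⁻¹) • (Y q (n+1) * X q 2)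

/-- `M q n` is the element `M_{2n+1}`:  `M₁ = L₁`, `M_{2n+1} = [L₂, M_{2n-1}]`
(a plain commutator, the braiding scalar being `1`). -/
def M (q : ℂ) : ℕ → U q
  | 0 => L q 1
  | (n+1) => L q 2 * M q n - M q n * L q 2

/-- `L̃_n = (L_n + L_n′)/2`, with the convention `L̃_n = 0` for `n < 0`
(note `L̃₀ = θ⁻¹·1`). -/
def Lt (q : ℂ) (n : ℤ) : U q :=
  if 0 ≤ n then ((2 : ℂ)⁻¹) • (L q n.toNat + L' q n.toNat) else 0

/-- `L̂_{n+1} = [L_n, L₁] = L_n L₁ - (-1)^n L₁ L_n`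
(the braiding scalar is `χ((n,n),(1,1)) = (-1)^n`); in particular `L̂₁ = 0`. -/
def Lhat (q : ℂ) : ℕ → U q
  | 0 => 0
  | (n+1) => L q n * L q 1 - ((-1 : ℂ)^n) • (L q 1 * L q n)

/-- the sequence `P₀ = 1`, `P_n = q^n + q^(n-1) + (-1)^(n-1) P_(n-1)`. -/
def P (q : ℂ) : ℕ → ℂ
  | 0 => 1
  | (n+1) => q^(n+1) + q^n + (-1 : ℂ)^n * P q n

/-- the sequence `Q₀ = 1`, `Q_n = q^n - q^(n-1) + (-1)^n Q_(n-1)`. -/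
def Q (q : ℂ) : ℕ → ℂ
  | 0 => 1
  | (n+1) => q^(n+1) - q^n + (-1 : ℂ)^(n+1) * Q q n

/-- `q` is not a root of unity. -/
def NotRootOfUnity (q : ℂ) : Prop := ∀ n : ℕ, n ≠ 0 → q ^ n ≠ 1

end QAff

open QAff

lemma L1_eq (q : ℂ) : L1U q = L q 1 := rfl

lemma Xrec (q : ℂ) (j : ℕ) :
    X q (j+1+2) = X q (j+1) * (L q 1)^2 - (L q 1)^2 * X q (j+1) := by
  have e2 : X q (j+2) = X q (j+1) * L1U q - ((-1 : ℂ)^j) • (L1U q * X q (j+1)) := rfl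
  have e3 : X q (j+1+2) = X q (j+2) * L1U q - ((-1 : ℂ)^(j+1)) • (L1U q * X q (j+2)) := rfl
  rw [e3, e2, L1_eq]
  rcases Nat.even_or_odd j with hj | hj <;>
    simp only [hj.neg_one_pow, hj.add_one.neg_one_pow] <;>
    simp only [pow_two, mul_sub, sub_mul, smul_sub, smul_mul_assoc, mul_smul_comm, mul_assoc] <;>
    module

lemma Yrec (q : ℂ) (i : ℕ) :
    Y q (i+1+2) = (L q 1)^2 * Y q (i+1) - Y q (i+1) * (L q 1)^2 := by
  have e2 : Y q (i+2) = L1U q * Y q (i+1) - ((-1 : ℂ)^(i+1)) • (Y q (i+1) * L1U q) := rfl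
  have e3 : Y q (i+1+2) = L1U q * Y q (i+2) - ((-1 : ℂ)^(i+2)) • (Y q (i+2) * L1U q) := rfl
  have h1 : ((-1:ℂ))^(i+2) = (-1)^i := by rw [pow_add]; norm_num
  rw [h1] at e3
  rcases Nat.even_or_odd i with hi | hi <;>
    simp only [hi.neg_one_pow, hi.add_one.neg_one_pow] at e2 e3 ⊢ <;>
    rw [e3, e2, L1_eq] <;>
    simp only [pow_two, mul_sub, sub_mul, smul_sub, smul_mul_assoc, mul_smul_comm, mul_assoc] <;>
    module

lemma tele (q : ℂ) (σ : ℂ) {a b : ℕ} (ha : 1 ≤ a) (hb : 1 ≤ b) :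
    X q (a+2) * Y q b - σ • (Y q b * X q (a+2))
      = (X q a * Y q (b+2) - σ • (Y q (b+2) * X q a))
        + ((X q a * Y q b - σ • (Y q b * X q a)) * (L q 1)^2
            - (L q 1)^2 * (X q a * Y q b - σ • (Y q b * X q a))) := by
  obtain ⟨j, rfl⟩ : ∃ j, a = j+1 := ⟨a-1, by omega⟩
  obtain ⟨i, rfl⟩ : ∃ i, b = i+1 := ⟨b-1, by omega⟩
  rw [Xrec, Yrec]
  simp only [mul_sub, sub_mul, smul_sub, smul_mul_assoc, mul_smul_comm, mul_assoc]
  module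

lemma L'formula (q : ℂ) (i : ℕ) :
    L' q (i+2) = L q (i+2) + ((-1 : ℂ)^(i+1)) • (L q (i+1) * L q 1) - L q 1 * L q (i+1) := by
  have e1 : L' q (i+2) = X q 2 * Y q (i+1) - ((-1 : ℂ)^(i+1) * q⁻¹) • (Y q (i+1) * X q 2) := rfl
  have e2 : X q 2 = X q 1 * L1U q - ((-1:ℂ)^0) • (L1U q * X q 1) := rfl
  have e3 : L q (i+2) = X q 1 * Y q (i+2) - q⁻¹ • (Y q (i+2) * X q 1) := rfl
  have e4 : Y q (i+2) = L1U q * Y q (i+1) - ((-1 : ℂ)^(i+1)) • (Y q (i+1) * L1U q) := rfl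
  have e5 : L q (i+1) = X q 1 * Y q (i+1) - q⁻¹ • (Y q (i+1) * X q 1) := rfl
  rw [e1, e2, e3, e4, e5, L1_eq]
  simp only [pow_zero, one_smul, mul_sub, sub_mul, smul_sub, smul_mul_assoc, mul_smul_comm,
    mul_assoc, smul_smul]
  module

lemma L'comm (q : ℂ) {n j : ℕ}
    (h : ∀ j : ℕ, 1 ≤ j → j + 2 ≤ n → L q j * (L q 1)^2 = (L q 1)^2 * L q j)
    (h1 : 1 ≤ j) (h2 : j + 2 ≤ n) :
    L' q j * (L q 1)^2 = (L q 1)^2 * L' q j := by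
  match j, h1, h2 with
  | 1, _, h2 =>
    show L q 1 * (L q 1)^2 = (L q 1)^2 * L q 1
    exact h 1 le_rfl h2
  | (i+2), _, h2 =>
    rw [L'formula]
    have hA : Commute (L q (i+2)) ((L q 1)^2) := h (i+2) (by omega) h2
    have hB : Commute (L q (i+1)) ((L q 1)^2) := h (i+1) (by omega) (by omega)
    have hC : Commute (L q 1) ((L q 1)^2) := (Commute.refl _).pow_right 2
    exact ((hA.add_left ((hB.mul_left hC).smul_left _)).sub_left (hC.mul_left hB))

lemma main (q : ℂ) : ∀ n : ℕ, 1 ≤ n →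
    (∀ j : ℕ, 1 ≤ j → j + 2 ≤ n → L q j * (L q 1)^2 = (L q 1)^2 * L q j) →
    (∀ k p : ℕ, 1 ≤ p → 2*k + p = n →
       X q (2*k+1) * Y q p - q⁻¹ • (Y q p * X q (2*k+1)) = L q n) ∧
    (∀ k p : ℕ, 1 ≤ p → 2*k + 1 + p = n →
       X q (2*k+2) * Y q p - ((-1:ℂ)^p * q⁻¹) • (Y q p * X q (2*k+2)) = L' q n) := by
  intro n
  induction n using Nat.strong_induction_on with
  | _ n ih =>
  intro hn h
  constructor
  · intro k
    induction k with
    | zero =>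
      intro p hp hsum
      obtain ⟨i, rfl⟩ : ∃ i, p = i + 1 := ⟨p-1, by omega⟩
      obtain rfl : n = i + 1 := by omega
      show X q 1 * Y q (i+1) - q⁻¹ • (Y q (i+1) * X q 1) = L q (i+1)
      rfl
    | succ k ihk =>
      intro p hp hsum
      subst hsum
      have e1 := ihk (p+2) (by omega) (by omega)
      have hm := ih (2*k+p) (by omega) (by omega) (fun j h1 h2 => h j h1 (by omega))
      have e2 := hm.1 k p hp rfl
      have hc := h (2*k+p) (by omega) (by omega)
      have hidx : 2*(k+1)+1 = (2*k+1)+2 := by omega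
      rw [hidx, tele q q⁻¹ (by omega) hp, e1, e2, hc, sub_self, add_zero]
  · intro k
    induction k with
    | zero =>
      intro p hp hsum
      obtain ⟨i, rfl⟩ : ∃ i, p = i + 1 := ⟨p-1, by omega⟩
      obtain rfl : n = i + 2 := by omega
      show X q 2 * Y q (i+1) - ((-1:ℂ)^(i+1) * q⁻¹) • (Y q (i+1) * X q 2) = L' q (i+2)
      rfl
    | succ k ihk =>
      intro p hp hsum
      subst hsum
      have hsgn : ((-1:ℂ))^(p+2) = (-1)^p := by rw [pow_add]; norm_num
      have e1 := ihk (p+2) (by omega) (by omega)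
      rw [hsgn] at e1
      have hm := ih (2*k+1+p) (by omega) (by omega) (fun j h1 h2 => h j h1 (by omega))
      have e2 := hm.2 k p hp rfl
      have hc : L' q (2*k+1+p) * (L q 1)^2 = (L q 1)^2 * L' q (2*k+1+p) :=
        L'comm q h (by omega) (by omega)
      have hidx : 2*(k+1)+2 = (2*k+2)+2 := by omega
      rw [hidx, tele q ((-1:ℂ)^p * q⁻¹) (by omega) hp, e1, e2, hc, sub_self, add_zero]



/-- In `U = U_q(A(0,2)^{(4)})^+`: fix `n ≥ 1`; if `[L_j, L₁²] = 0` for all `1 ≤ j ≤ n-2`, then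
`[X_{2k+1}, Y_{n-2k}] = L_n` for `0 ≤ k ≤ (n-1)/2` and `[X_{2k+2}, Y_{n-2k-1}] = L_n′` for
`0 ≤ k ≤ (n-2)/2`.  The braided brackets here are
`[X_{2k+1}, Y_{n-2k}] = X_{2k+1}Y_{n-2k} - q⁻¹ Y_{n-2k}X_{2k+1}` and
`[X_{2k+2}, Y_{n-2k-1}] = X_{2k+2}Y_{n-2k-1} - (-1)^(n-1) q⁻¹ Y_{n-2k-1}X_{2k+2}`. -/
theorem stmt2 (q : ℂ) (hq0 : q ≠ 0) (hq : NotRootOfUnity q) (n : ℕ) (hn : 1 ≤ n)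
    (h : ∀ j : ℕ, 1 ≤ j → j ≤ n - 2 → L q j * (L q 1)^2 = (L q 1)^2 * L q j) :
    (∀ k : ℕ, 2*k+1 ≤ n →
      X q (2*k+1) * Y q (n - 2*k) - q⁻¹ • (Y q (n - 2*k) * X q (2*k+1)) = L q n) ∧
    (∀ k : ℕ, 2*k+2 ≤ n →
      X q (2*k+2) * Y q (n - 2*k - 1) - ((-1 : ℂ)^(n-1) * q⁻¹) • (Y q (n - 2*k - 1) * X q (2*k+2))
        = L' q n) := by

  have h' : ∀ j : ℕ, 1 ≤ j → j + 2 ≤ n → L q j * (L q 1)^2 = (L q 1)^2 * L q j :=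
    fun j h1 h2 => h j h1 (by omega)
  have hm := main q n hn h'
  constructor
  · intro k hk
    exact hm.1 k (n - 2*k) (by omega) (by omega)
  · intro k hk
    have hpar : ((-1:ℂ))^(n-1) = (-1)^(n - 2*k - 1) := by
      have he : n - 1 = 2*k + (n - 2*k - 1) := by omega
      rw [he, pow_add, pow_mul, neg_one_sq, one_pow, one_mul]
    rw [hpar]
    exact hm.2 k (n - 2*k - 1) (by omega) (by omega)
end
end

section
/- In U = U_q(A(0,2)^{(4)})^+ the following identities hold (all four brackets are plain commutators, the braiding scalars being 1): [X₂, L₂] = q·X₄ + θ·L₁X₃; [X₂, L₂′] = (q−2)X₄ + θ·L₁X₃; [L₂, Y₂] = (q+2)Y₄ − θ·Y₃L₁; [L₂′, Y₂] = q·Y₄ − θ·Y₃L₁. -/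
noncomputable section

open QAff

namespace QAff

def X3F (q : ℂ) : F := X2F q * L1F q + L1F q * X2F q
def X4F (q : ℂ) : F := X3F q * L1F q - L1F q * X3F q
def Y3F (q : ℂ) : F := L1F q * Y2F q - Y2F q * L1F q
def Y4F (q : ℂ) : F := L1F q * Y3F q + Y3F q * L1F q
def L2F (q : ℂ) : F := x1 * Y2F q - q⁻¹ • (Y2F q * x1)
def Lp2F (q : ℂ) : F := X2F q * x2 + q⁻¹ • (x2 * X2F q)

lemma cpow1 (q : ℂ) (hq0 : q ≠ 0) {n m : ℕ} (h : m ≤ n) : q ^ n * q⁻¹ ^ m = q ^ (n - m) := by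
  rw [inv_pow, ← div_eq_mul_inv, div_eq_iff (pow_ne_zero _ hq0), ← pow_add]
  congr 1; omega

lemma cpow2 (q : ℂ) (hq0 : q ≠ 0) {n m : ℕ} (h : n ≤ m) : q ^ n * q⁻¹ ^ m = q⁻¹ ^ (m - n) := by
  rw [← cpow1 q⁻¹ (inv_ne_zero hq0) h, inv_inv]; ring

lemma cpow1' (q : ℂ) (hq0 : q ≠ 0) {n : ℕ} (h : 1 ≤ n) : q ^ n * q⁻¹ = q ^ (n - 1) := by
  simpa using cpow1 q hq0 (m := 1) h

lemma cpow2' (q : ℂ) (hq0 : q ≠ 0) {m : ℕ} (h : 1 ≤ m) : q * q⁻¹ ^ m = q⁻¹ ^ (m - 1) := by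
  simpa using cpow2 q hq0 (n := 1) h

set_option maxHeartbeats 1000000000 in
set_option maxRecDepth 100000 in
lemma key1 (q : ℂ) (hq0 : q ≠ 0) :
    (q^3+q^4+q^5 : ℂ) • (X2F q * L2F q - L2F q * X2F q - (q • X4F q + θ q • (L1F q * X3F q))) =
    ((q^2+q^3 : ℂ)) • ((serre1 q) * x2 * x2 * x1)
    + ((q^3-q^4+q^5 : ℂ)) • ((serre1 q) * x2 * x1 * x2)
    + ((-2*q^4 : ℂ)) • ((serre1 q) * x1 * x2 * x2)
    + ((1-q-q^3 : ℂ)) • (x2 * (serre1 q) * x2 * x1)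
    + ((-q+q^2+q^3 : ℂ)) • (x2 * (serre1 q) * x1 * x2)
    + ((-q : ℂ)) • (x2 * x2 * (serre1 q) * x1)
    + ((-q^4 : ℂ)) • (x1 * (serre1 q) * x2 * x2)
    + ((q^2+q^3-q^4 : ℂ)) • (x2 * x1 * (serre1 q) * x2)
    + ((-q^2-q^4+q^5 : ℂ)) • (x1 * x2 * (serre1 q) * x2)
    + ((-2*q : ℂ)) • (x2 * x2 * x1 * (serre1 q))
    + ((1-q+q^2 : ℂ)) • (x2 * x1 * x2 * (serre1 q))
    + ((q^2+q^3 : ℂ)) • (x1 * x2 * x2 * (serre1 q))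
    + ((-q : ℂ)) • ((serre2 q) * x1 * x1 * x1)
    + ((q+q^2+q^3 : ℂ)) • (x1 * (serre2 q) * x1 * x1)
    + ((-q^2-q^3-q^4 : ℂ)) • (x1 * x1 * (serre2 q) * x1)
    + ((q^4 : ℂ)) • (x1 * x1 * x1 * (serre2 q)) := by
  simp only [X4F, X3F, X2F, Y4F, Y3F, Y2F, L2F, Lp2F, L1F, serre1, serre2, θ, mul_add,
    add_mul, mul_sub, sub_mul, smul_mul_assoc, mul_smul_comm, smul_sub, smul_add,
    smul_smul, mul_assoc]
  match_scalars
  all_goals try ring_nf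
  all_goals try (simp (disch := omega) only [cpow1 q hq0, cpow2 q hq0, cpow1' q hq0,
    cpow2' q hq0, mul_inv_cancel₀ hq0])
  all_goals try norm_num
  all_goals try ring1

set_option maxHeartbeats 1000000000 in
set_option maxRecDepth 100000 in
lemma key2 (q : ℂ) (hq0 : q ≠ 0) :
    (q^3+q^4+q^5 : ℂ) • (X2F q * Lp2F q - Lp2F q * X2F q - ((q-2) • X4F q + θ q • (L1F q * X3F q))) =
    ((q^2+q^3 : ℂ)) • ((serre1 q) * x2 * x2 * x1)
    + ((q^3-q^4+q^5 : ℂ)) • ((serre1 q) * x2 * x1 * x2)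
    + ((-2*q^4 : ℂ)) • ((serre1 q) * x1 * x2 * x2)
    + ((1-q-q^3 : ℂ)) • (x2 * (serre1 q) * x2 * x1)
    + ((-q+q^2+q^3 : ℂ)) • (x2 * (serre1 q) * x1 * x2)
    + ((-q : ℂ)) • (x2 * x2 * (serre1 q) * x1)
    + ((-q^4 : ℂ)) • (x1 * (serre1 q) * x2 * x2)
    + ((q^2+q^3-q^4 : ℂ)) • (x2 * x1 * (serre1 q) * x2)
    + ((-q^2-q^4+q^5 : ℂ)) • (x1 * x2 * (serre1 q) * x2)
    + ((-2*q : ℂ)) • (x2 * x2 * x1 * (serre1 q))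
    + ((1-q+q^2 : ℂ)) • (x2 * x1 * x2 * (serre1 q))
    + ((q^2+q^3 : ℂ)) • (x1 * x2 * x2 * (serre1 q))
    + ((-q : ℂ)) • ((serre2 q) * x1 * x1 * x1)
    + ((q+q^2+q^3 : ℂ)) • (x1 * (serre2 q) * x1 * x1)
    + ((-q^2-q^3-q^4 : ℂ)) • (x1 * x1 * (serre2 q) * x1)
    + ((q^4 : ℂ)) • (x1 * x1 * x1 * (serre2 q)) := by
  simp only [X4F, X3F, X2F, Y4F, Y3F, Y2F, L2F, Lp2F, L1F, serre1, serre2, θ, mul_add,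
    add_mul, mul_sub, sub_mul, smul_mul_assoc, mul_smul_comm, smul_sub, smul_add,
    smul_smul, mul_assoc]
  match_scalars
  all_goals try ring_nf
  all_goals try (simp (disch := omega) only [cpow1 q hq0, cpow2 q hq0, cpow1' q hq0,
    cpow2' q hq0, mul_inv_cancel₀ hq0])
  all_goals try norm_num
  all_goals try ring1

set_option maxHeartbeats 1000000000 in
set_option maxRecDepth 100000 in
lemma key3 (q : ℂ) (hq0 : q ≠ 0) :
    (q^3-q^4+q^5 : ℂ) • (L2F q * Y2F q - Y2F q * L2F q - ((q+2) • Y4F q - θ q • (Y3F q * L1F q))) =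
    ((-q^4 : ℂ)) • ((serre1 q) * x2 * x2 * x2)
    + ((-q^2+q^3-q^4 : ℂ)) • (x2 * (serre1 q) * x2 * x2)
    + ((q-q^2+q^3 : ℂ)) • (x2 * x2 * (serre1 q) * x2)
    + ((q : ℂ)) • (x2 * x2 * x2 * (serre1 q))
    + ((-2*q : ℂ)) • ((serre2 q) * x2 * x1 * x1)
    + ((1+q+q^2 : ℂ)) • ((serre2 q) * x1 * x2 * x1)
    + ((-q^2+q^3 : ℂ)) • ((serre2 q) * x1 * x1 * x2)
    + ((q : ℂ)) • (x2 * (serre2 q) * x1 * x1)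
    + ((-q^2+q^3+q^4 : ℂ)) • (x1 * (serre2 q) * x2 * x1)
    + ((-q^2-q^4-q^5 : ℂ)) • (x1 * (serre2 q) * x1 * x2)
    + ((-1-q-q^3 : ℂ)) • (x2 * x1 * (serre2 q) * x1)
    + ((q+q^2-q^3 : ℂ)) • (x1 * x2 * (serre2 q) * x1)
    + ((q^4 : ℂ)) • (x1 * x1 * (serre2 q) * x2)
    + ((q^2-q^3 : ℂ)) • (x2 * x1 * x1 * (serre2 q))
    + ((q^3+q^4+q^5 : ℂ)) • (x1 * x2 * x1 * (serre2 q))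
    + ((-2*q^4 : ℂ)) • (x1 * x1 * x2 * (serre2 q)) := by
  simp only [X4F, X3F, X2F, Y4F, Y3F, Y2F, L2F, Lp2F, L1F, serre1, serre2, θ, mul_add,
    add_mul, mul_sub, sub_mul, smul_mul_assoc, mul_smul_comm, smul_sub, smul_add,
    smul_smul, mul_assoc]
  match_scalars
  all_goals try ring_nf
  all_goals try (simp (disch := omega) only [cpow1 q hq0, cpow2 q hq0, cpow1' q hq0,
    cpow2' q hq0, mul_inv_cancel₀ hq0])
  all_goals try norm_num
  all_goals try ring1

set_option maxHeartbeats 1000000000 in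
set_option maxRecDepth 100000 in
lemma key4 (q : ℂ) (hq0 : q ≠ 0) :
    (q^3-q^4+q^5 : ℂ) • (Lp2F q * Y2F q - Y2F q * Lp2F q - (q • Y4F q - θ q • (Y3F q * L1F q))) =
    ((-q^4 : ℂ)) • ((serre1 q) * x2 * x2 * x2)
    + ((-q^2+q^3-q^4 : ℂ)) • (x2 * (serre1 q) * x2 * x2)
    + ((q-q^2+q^3 : ℂ)) • (x2 * x2 * (serre1 q) * x2)
    + ((q : ℂ)) • (x2 * x2 * x2 * (serre1 q))
    + ((-2*q : ℂ)) • ((serre2 q) * x2 * x1 * x1)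
    + ((1+q+q^2 : ℂ)) • ((serre2 q) * x1 * x2 * x1)
    + ((-q^2+q^3 : ℂ)) • ((serre2 q) * x1 * x1 * x2)
    + ((q : ℂ)) • (x2 * (serre2 q) * x1 * x1)
    + ((-q^2+q^3+q^4 : ℂ)) • (x1 * (serre2 q) * x2 * x1)
    + ((-q^2-q^4-q^5 : ℂ)) • (x1 * (serre2 q) * x1 * x2)
    + ((-1-q-q^3 : ℂ)) • (x2 * x1 * (serre2 q) * x1)
    + ((q+q^2-q^3 : ℂ)) • (x1 * x2 * (serre2 q) * x1)
    + ((q^4 : ℂ)) • (x1 * x1 * (serre2 q) * x2)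
    + ((q^2-q^3 : ℂ)) • (x2 * x1 * x1 * (serre2 q))
    + ((q^3+q^4+q^5 : ℂ)) • (x1 * x2 * x1 * (serre2 q))
    + ((-2*q^4 : ℂ)) • (x1 * x1 * x2 * (serre2 q)) := by
  simp only [X4F, X3F, X2F, Y4F, Y3F, Y2F, L2F, Lp2F, L1F, serre1, serre2, θ, mul_add,
    add_mul, mul_sub, sub_mul, smul_mul_assoc, mul_smul_comm, smul_sub, smul_add,
    smul_smul, mul_assoc]
  match_scalars
  all_goals try ring_nf
  all_goals try (simp (disch := omega) only [cpow1 q hq0, cpow2 q hq0, cpow1' q hq0,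
    cpow2' q hq0, mul_inv_cancel₀ hq0])
  all_goals try norm_num
  all_goals try ring1

end QAff


/-- In `U = U_q(A(0,2)^{(4)})^+`:
`[X₂, L₂] = qX₄ + θL₁X₃`, `[X₂, L₂′] = (q-2)X₄ + θL₁X₃`,
`[L₂, Y₂] = (q+2)Y₄ - θY₃L₁`, `[L₂′, Y₂] = qY₄ - θY₃L₁` (all plain commutators). -/
theorem stmt6 (q : ℂ) (hq0 : q ≠ 0) (hq : NotRootOfUnity q) :
    (X q 2 * L q 2 - L q 2 * X q 2 = q • X q 4 + θ q • (L q 1 * X q 3)) ∧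
    (X q 2 * L' q 2 - L' q 2 * X q 2 = (q - 2) • X q 4 + θ q • (L q 1 * X q 3)) ∧
    (L q 2 * Y q 2 - Y q 2 * L q 2 = (q + 2) • Y q 4 - θ q • (Y q 3 * L q 1)) ∧
    (L' q 2 * Y q 2 - Y q 2 * L' q 2 = q • Y q 4 - θ q • (Y q 3 * L q 1)) := by
  have hq0' := hq0
  have hs1 : π q (serre1 q) = 0 := by
    have h := RingQuot.mkAlgHom_rel ℂ (Rel.one (q := q))
    simpa [π] using h
  have hs2 : π q (serre2 q) = 0 := by
    have h := RingQuot.mkAlgHom_rel ℂ (Rel.two (q := q))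
    simpa [π] using h
  have hL1 : L1U q = π q (L1F q) := by
    simp [L1U, L1F, map_sub, map_mul, map_smul]
  have hl1 : L q 1 = π q (L1F q) := by
    rw [show (1:ℕ) = 0+1 from rfl, L, X, Y]
    simp [L1F, map_sub, map_mul, map_smul]
  have hx2 : X q 2 = π q (X2F q) := by
    have h : X q 2 = π q x1 * L1U q - L1U q * π q x1 := by
      show X q (0+2) = _
      rw [X]; norm_num; rw [X]
    rw [h, hL1, X2F]
    simp [map_sub, map_mul]
  have hx3 : X q 3 = π q (X3F q) := by
    have h : X q 3 = X q 2 * L1U q + L1U q * X q 2 := by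
      show X q (1+2) = _
      rw [X]; norm_num; module
    rw [h, hL1, hx2, X3F]
    simp [map_add, map_mul]
  have hx4 : X q 4 = π q (X4F q) := by
    have h : X q 4 = X q 3 * L1U q - L1U q * X q 3 := by
      show X q (2+2) = _
      rw [X]; norm_num
    rw [h, hL1, hx3, X4F]
    simp [map_sub, map_mul]
  have hy2 : Y q 2 = π q (Y2F q) := by
    have h : Y q 2 = L1U q * π q x2 + π q x2 * L1U q := by
      show Y q (0+2) = _
      rw [Y]; norm_num; rw [Y]; module
    rw [h, hL1, Y2F]
    simp [map_add, map_mul]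
  have hy3 : Y q 3 = π q (Y3F q) := by
    have h : Y q 3 = L1U q * Y q 2 - Y q 2 * L1U q := by
      show Y q (1+2) = _
      rw [Y]; norm_num
    rw [h, hL1, hy2, Y3F]
    simp [map_sub, map_mul]
  have hy4 : Y q 4 = π q (Y4F q) := by
    have h : Y q 4 = L1U q * Y q 3 + Y q 3 * L1U q := by
      show Y q (2+2) = _
      rw [Y]; norm_num; module
    rw [h, hL1, hy3, Y4F]
    simp [map_add, map_mul]
  have hl2 : L q 2 = π q (L2F q) := by
    have h : L q 2 = π q x1 * Y q 2 - q⁻¹ • (Y q 2 * π q x1) := by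
      show L q (1+1) = _
      rw [L, X]
    rw [h, hy2, L2F]
    simp [map_sub, map_mul, map_smul]
  have hlp2 : L' q 2 = π q (Lp2F q) := by
    have h : L' q 2 = X q 2 * π q x2 + q⁻¹ • (π q x2 * X q 2) := by
      show L' q (0+2) = _
      rw [L']; norm_num; rw [Y]; module
    rw [h, hx2, Lp2F]
    simp [map_add, map_mul, map_smul]
  have h3ne : (1 + q + q^2 : ℂ) ≠ 0 := by
    intro h
    exact hq 3 (by norm_num) (by linear_combination (q - 1) * h)
  have h6ne : (1 - q + q^2 : ℂ) ≠ 0 := by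
    intro h
    have h3 : q ^ 3 = -1 := by linear_combination (q + 1) * h
    have h6 : q ^ 6 = 1 := by
      rw [show (6:ℕ) = 3*2 from rfl, pow_mul, h3]; norm_num
    exact hq 6 (by norm_num) h6
  have hC1 : (q^3 + q^4 + q^5 : ℂ) ≠ 0 := by
    have he : (q^3 + q^4 + q^5 : ℂ) = q^3 * (1 + q + q^2) := by ring
    rw [he]
    exact mul_ne_zero (pow_ne_zero _ hq0) h3ne
  have hC2 : (q^3 - q^4 + q^5 : ℂ) ≠ 0 := by
    have he : (q^3 - q^4 + q^5 : ℂ) = q^3 * (1 - q + q^2) := by ring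
    rw [he]
    exact mul_ne_zero (pow_ne_zero _ hq0) h6ne
  have cancel : ∀ (C : ℂ) (v : U q), C ≠ 0 → C • v = 0 → v = 0 := by
    intro C v hC h
    have h2 := congrArg (fun z => C⁻¹ • z) h
    simpa [smul_smul, inv_mul_cancel₀ hC] using h2
  refine ⟨?_, ?_, ?_, ?_⟩
  · rw [← sub_eq_zero]
    refine cancel _ _ hC1 ?_
    have hD : X q 2 * L q 2 - L q 2 * X q 2 - (q • X q 4 + θ q • (L q 1 * X q 3))
        = π q (X2F q * L2F q - L2F q * X2F q - (q • X4F q + θ q • (L1F q * X3F q))) := by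
      rw [hx2, hx3, hx4, hl1, hl2]
      simp [map_sub, map_add, map_mul, map_smul]
    rw [hD, ← map_smul, key1 q hq0]
    simp [map_add, map_smul, map_mul, hs1, hs2]
  · rw [← sub_eq_zero]
    refine cancel _ _ hC1 ?_
    have hD : X q 2 * L' q 2 - L' q 2 * X q 2 - ((q - 2) • X q 4 + θ q • (L q 1 * X q 3))
        = π q (X2F q * Lp2F q - Lp2F q * X2F q - ((q - 2) • X4F q + θ q • (L1F q * X3F q))) := by
      rw [hx2, hx3, hx4, hl1, hlp2]
      simp [map_sub, map_add, map_mul, map_smul]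
    rw [hD, ← map_smul, key2 q hq0]
    simp [map_add, map_smul, map_mul, hs1, hs2]
  · rw [← sub_eq_zero]
    refine cancel _ _ hC2 ?_
    have hD : L q 2 * Y q 2 - Y q 2 * L q 2 - ((q + 2) • Y q 4 - θ q • (Y q 3 * L q 1))
        = π q (L2F q * Y2F q - Y2F q * L2F q - ((q + 2) • Y4F q - θ q • (Y3F q * L1F q))) := by
      rw [hy2, hy3, hy4, hl1, hl2]
      simp [map_sub, map_add, map_mul, map_smul]
    rw [hD, ← map_smul, key3 q hq0]
    simp [map_add, map_smul, map_mul, hs1, hs2]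
  · rw [← sub_eq_zero]
    refine cancel _ _ hC2 ?_
    have hD : L' q 2 * Y q 2 - Y q 2 * L' q 2 - (q • Y q 4 - θ q • (Y q 3 * L q 1))
        = π q (Lp2F q * Y2F q - Y2F q * Lp2F q - (q • Y4F q - θ q • (Y3F q * L1F q))) := by
      rw [hy2, hy3, hy4, hl1, hlp2]
      simp [map_sub, map_add, map_mul, map_smul]
    rw [hD, ← map_smul, key4 q hq0]
    simp [map_add, map_smul, map_mul, hs1, hs2]
end
end
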